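/- arXiv:2508.08740 — 5 statements merged into one kernel-verified Lean document; each statement's English description precedes it below -/
import Mathlib

section
/- Consider the greedy L-fold allocation process with m bins (m ≥ 1), a parameter L with 1 ≤ L ≤ m, and a sequence of r items with weights d_1 ≥ d_2 ≥ ⋯ ≥ d_r ≥ 0 such that d_i ≤ Δ for every i; let P = Σ_{i=1}^r d_i. Then at the end of the process, every bin has load at most max(4PL/m, Δ). -/
open Finset

section Aux
variable {m : ℕ}

/-- Bins strictly lex-below `b` w.r.t. loads `f`. -/
noncomputable def below (f : Fin m → ℝ) (b : Fin m) : Finset (Fin m) :=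
  univ.filter fun b' => f b' < f b ∨ (f b' = f b ∧ b' < b)

lemma ncard_below (f : Fin m → ℝ) (b : Fin m) :
    {b' : Fin m | f b' < f b ∨ (f b' = f b ∧ b' < b)}.ncard = (below f b).card := by
  rw [Set.ncard_eq_toFinset_card', Set.toFinset_setOf]
  rfl

lemma mem_below_trans {f : Fin m → ℝ} {a b c : Fin m}
    (hab : a ∈ below f b) (hbc : b ∈ below f c) : a ∈ below f c := by
  simp only [below, mem_filter, mem_univ, true_and] at *
  rcases hab with h1 | ⟨h1, h1'⟩ <;> rcases hbc with h2 | ⟨h2, h2'⟩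
  · exact Or.inl (h1.trans h2)
  · exact Or.inl (h2 ▸ h1)
  · exact Or.inl (h1 ▸ h2)
  · exact Or.inr ⟨h1.trans h2, h1'.trans h2'⟩

lemma not_mem_below_self (f : Fin m → ℝ) (b : Fin m) : b ∉ below f b := by
  simp [below]

lemma below_ssubset {f : Fin m → ℝ} {b c : Fin m} (h : b ∈ below f c) :
    below f b ⊂ below f c :=
  ⟨fun a ha => mem_below_trans ha h,
   fun hsub => not_mem_below_self f b (hsub h)⟩

lemma below_total {f : Fin m → ℝ} {b c : Fin m} (h : b ≠ c) :
    b ∈ below f c ∨ c ∈ below f b := by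
  simp only [below, mem_filter, mem_univ, true_and]
  rcases lt_trichotomy (f b) (f c) with h1 | h1 | h1
  · exact Or.inl (Or.inl h1)
  · rcases lt_or_gt_of_ne h with h2 | h2
    · exact Or.inl (Or.inr ⟨h1, h2⟩)
    · exact Or.inr (Or.inr ⟨h1.symm, h2⟩)
  · exact Or.inr (Or.inl h1)

lemma card_below_injective (f : Fin m → ℝ) :
    Function.Injective fun b => (below f b).card := by
  intro b c h
  by_contra hne
  rcases below_total hne with hb | hb
  · exact absurd h (Nat.ne_of_lt (card_lt_card (below_ssubset hb)))
  · exact absurd h.symm (Nat.ne_of_lt (card_lt_card (below_ssubset hb)))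

lemma card_receivers_le (f : Fin m → ℝ) (L : ℕ) :
    (univ.filter fun b : Fin m => (below f b).card < L).card ≤ L := by
  calc (univ.filter fun b : Fin m => (below f b).card < L).card
      ≤ (Finset.range L).card := by
        apply Finset.card_le_card_of_injOn (fun b => (below f b).card)
        · intro b hb; exact mem_range.mpr (mem_filter.mp hb).2
        · intro a _ b _ h; exact card_below_injective f h
    _ = L := card_range L

lemma receiver_mul_le_sum {f : Fin m → ℝ} (hf : ∀ b, 0 ≤ f b) {L : ℕ} {b : Fin m}
    (hb : (below f b).card < L) :
    ((m : ℝ) - L + 1) * f b ≤ ∑ b', f b' := by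
  have hcardle : (below f b).card ≤ m := by
    simpa using card_le_card (subset_univ (below f b))
  have hcompl : ((below f b)ᶜ.card : ℝ) = (m : ℝ) - (below f b).card := by
    rw [card_compl]
    rw [Fintype.card_fin, Nat.cast_sub hcardle]
  have h1 : ∀ b' ∈ (below f b)ᶜ, f b ≤ f b' := by
    intro b' hb'
    simp only [below, mem_compl, mem_filter, mem_univ, true_and, not_or, not_and] at hb'
    exact le_of_not_gt hb'.1
  have h2 : ((below f b)ᶜ.card : ℝ) * f b ≤ ∑ b' ∈ (below f b)ᶜ, f b' := by
    simpa [mul_comm] using Finset.card_nsmul_le_sum ((below f b)ᶜ) f (f b) h1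
  have h3 : ∑ b' ∈ (below f b)ᶜ, f b' ≤ ∑ b', f b' :=
    Finset.sum_le_sum_of_subset_of_nonneg (subset_univ _) (fun i _ _ => hf i)
  have h4 : ((m : ℝ) - L + 1) ≤ ((below f b)ᶜ.card : ℝ) := by
    rw [hcompl]
    have : ((below f b).card : ℝ) ≤ (L : ℝ) - 1 := by
      have : (below f b).card + 1 ≤ L := hb
      have : ((below f b).card + 1 : ℝ) ≤ (L : ℝ) := by exact_mod_cast this
      linarith
    linarith
  nlinarith [hf b]
end Aux

/-- The loads of the `m` bins after the first `t` items have been processed by the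
greedy `L`-fold allocation process with item weights `d : Fin r → ℝ`:
at each step, the current item is assigned to the `L` bins of minimal current load,
ties broken by the fixed linear order on `Fin m` (lexicographic on (load, index)),
and the load of each of these bins increases by the item's weight. -/
noncomputable def greedyLoads {m r : ℕ} (L : ℕ) (d : Fin r → ℝ) : ℕ → Fin m → ℝ
  | 0 => fun _ => 0
  | (t + 1) =>
      let prev := greedyLoads L d t
      fun b =>
        if h : t < r then
          if {b' : Fin m | prev b' < prev b ∨ (prev b' = prev b ∧ b' < b)}.ncard < L then
            prev b + d ⟨t, h⟩
          else prev b
        else prev b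

section Greedy
variable {m r : ℕ} (L : ℕ) (d : Fin r → ℝ)

lemma greedyLoads_succ (t : ℕ) (b : Fin m) :
    greedyLoads L d (t + 1) b =
      if h : t < r then
        (if (below (greedyLoads L d t) b).card < L then
          greedyLoads L d t b + d ⟨t, h⟩
        else greedyLoads L d t b)
      else greedyLoads L d t b := by
  simp only [greedyLoads, ncard_below]

/-- partial sum of the first `t` weights -/
noncomputable def pSum (t : ℕ) : ℝ := ∑ i ∈ univ.filter (fun i : Fin r => (i : ℕ) < t), d i

lemma pSum_succ_of_lt {t : ℕ} (ht : t < r) :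
    pSum d (t + 1) = pSum d t + d ⟨t, ht⟩ := by
  unfold pSum
  have h : univ.filter (fun i : Fin r => (i : ℕ) < t + 1)
      = insert ⟨t, ht⟩ (univ.filter fun i : Fin r => (i : ℕ) < t) := by
    ext i
    simp [Nat.lt_succ_iff_lt_or_eq, Fin.ext_iff, or_comm]
    omega
  rw [h, Finset.sum_insert (by simp)]
  ring

lemma pSum_succ_of_ge {t : ℕ} (ht : ¬ t < r) :
    pSum d (t + 1) = pSum d t := by
  unfold pSum
  congr 1
  ext i
  have : (i : ℕ) < r := i.isLt
  constructor <;> intro h' <;> simp_all <;> omega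

lemma pSum_nonneg (h : ∀ i, 0 ≤ d i) (t : ℕ) : 0 ≤ pSum d t :=
  Finset.sum_nonneg fun i _ => h i

lemma pSum_le_total (h : ∀ i, 0 ≤ d i) (t : ℕ) : pSum d t ≤ ∑ i : Fin r, d i :=
  Finset.sum_le_sum_of_subset_of_nonneg (filter_subset _ _) (fun i _ _ => h i)

variable (hd : ∀ i, 0 ≤ d i)
include hd

lemma greedyLoads_nonneg : ∀ t (b : Fin m), 0 ≤ greedyLoads L d t b := by
  intro t
  induction t with
  | zero => intro b; simp [greedyLoads]
  | succ t ih =>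
    intro b
    rw [greedyLoads_succ]
    split_ifs with h1 h2
    · have := hd ⟨t, h1⟩; have := ih b; linarith
    · exact ih b
    · exact ih b

lemma greedyLoads_le_pSum : ∀ t (b : Fin m), greedyLoads L d t b ≤ pSum d t := by
  intro t
  induction t with
  | zero => intro b; simp [greedyLoads, pSum]
  | succ t ih =>
    intro b
    rw [greedyLoads_succ]
    split_ifs with h1 h2
    · rw [pSum_succ_of_lt d h1]; have := ih b; linarith
    · rw [pSum_succ_of_lt d h1]
      have := ih b; have := hd ⟨t, h1⟩; linarith
    · rw [pSum_succ_of_ge d h1]; exact ih b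

lemma sum_greedyLoads_le : ∀ t, ∑ b : Fin m, greedyLoads L d t b ≤ L * pSum d t := by
  intro t
  induction t with
  | zero => simp [greedyLoads, pSum]
  | succ t ih =>
    by_cases h1 : t < r
    · have hstep : ∑ b : Fin m, greedyLoads L d (t + 1) b
          = ∑ b : Fin m, greedyLoads L d t b
            + ((univ.filter fun b : Fin m => (below (greedyLoads L d t) b).card < L).card : ℝ)
              * d ⟨t, h1⟩ := by
        have : ∀ b : Fin m, greedyLoads L d (t + 1) b
            = greedyLoads L d t b
              + (if (below (greedyLoads L d t) b).card < L then d ⟨t, h1⟩ else 0) := by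
          intro b
          rw [greedyLoads_succ]
          split_ifs <;> simp_all
        rw [Finset.sum_congr rfl fun b _ => this b, Finset.sum_add_distrib]
        congr 1
        rw [← Finset.sum_filter, Finset.sum_const, nsmul_eq_mul]
      rw [hstep, pSum_succ_of_lt d h1]
      have hcard : ((univ.filter fun b : Fin m =>
          (below (greedyLoads L d t) b).card < L).card : ℝ) ≤ (L : ℝ) := by
        exact_mod_cast card_receivers_le (greedyLoads L d t) L
      have hdt := hd ⟨t, h1⟩
      nlinarith
    · have : ∀ b : Fin m, greedyLoads L d (t + 1) b = greedyLoads L d t b := by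
        intro b; rw [greedyLoads_succ]; split_ifs <;> simp_all
      rw [Finset.sum_congr rfl fun b _ => this b, pSum_succ_of_ge d h1]
      exact ih

lemma card_nonzero_le : ∀ t,
    (univ.filter fun b : Fin m => greedyLoads L d t b ≠ 0).card ≤ L * t := by
  intro t
  induction t with
  | zero => simp [greedyLoads]
  | succ t ih =>
    have hsub : (univ.filter fun b : Fin m => greedyLoads L d (t + 1) b ≠ 0)
        ⊆ (univ.filter fun b : Fin m => greedyLoads L d t b ≠ 0)
          ∪ (univ.filter fun b : Fin m => (below (greedyLoads L d t) b).card < L) := by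
      intro b hb
      simp only [mem_filter, mem_univ, true_and, mem_union] at hb ⊢
      by_contra hcon
      push_neg at hcon
      apply hb
      rw [greedyLoads_succ]
      split_ifs with h1 h2
      · exact absurd h2 (not_lt.mpr hcon.2)
      · exact hcon.1
      · exact hcon.1
    calc (univ.filter fun b : Fin m => greedyLoads L d (t + 1) b ≠ 0).card
        ≤ _ := card_le_card hsub
      _ ≤ (univ.filter fun b : Fin m => greedyLoads L d t b ≠ 0).card
            + (univ.filter fun b : Fin m => (below (greedyLoads L d t) b).card < L).card :=
          card_union_le _ _
      _ ≤ L * t + L := Nat.add_le_add ih (card_receivers_le _ _)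
      _ = L * (t + 1) := by ring

lemma receiver_prev_zero {t : ℕ} {b : Fin m}
    (hb : (below (greedyLoads L d t) b).card < L)
    (hz : L + (univ.filter fun b : Fin m => greedyLoads L d t b ≠ 0).card ≤ m) :
    greedyLoads L d t b = 0 := by
  by_contra hne
  have hpos : 0 < greedyLoads L d t b := lt_of_le_of_ne (greedyLoads_nonneg L d hd t b) (Ne.symm hne)
  have hsub : (univ.filter fun b' : Fin m => greedyLoads L d t b' = 0)
      ⊆ below (greedyLoads L d t) b := by
    intro b' hb'
    simp only [mem_filter, mem_univ, true_and] at hb'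
    simp only [below, mem_filter, mem_univ, true_and]
    exact Or.inl (hb' ▸ hpos)
  have hsplit := Finset.card_filter_add_card_filter_not
      (s := (univ : Finset (Fin m))) (p := fun b : Fin m => greedyLoads L d t b = 0)
  simp only [ne_eq, card_univ, Fintype.card_fin] at hsplit
  have hle := card_le_card hsub
  have hLb := hb
  simp only [ne_eq] at hz hle hsplit
  omega
end Greedy

/-- Greedy `L`-fold allocation with `m ≥ 1` bins, `1 ≤ L ≤ m`, and nonincreasing
nonnegative weights `d_1 ≥ ⋯ ≥ d_r ≥ 0` bounded by `Δ`, with total weight `P`: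
at the end of the process each bin has load at most `max (4PL/m) Δ`. -/
theorem greedy_allocation_max_load
    {m r : ℕ} (hm : 1 ≤ m) (L : ℕ) (hL1 : 1 ≤ L) (hLm : L ≤ m)
    (d : Fin r → ℝ) (hmono : ∀ i j : Fin r, i ≤ j → d j ≤ d i)
    (hnonneg : ∀ i : Fin r, 0 ≤ d i) (Δ : ℝ) (hΔ : ∀ i : Fin r, d i ≤ Δ)
    (P : ℝ) (hP : P = ∑ i : Fin r, d i) :
    ∀ b : Fin m, greedyLoads L d r b ≤ max (4 * P * L / m) Δ := by
  have hPnn : 0 ≤ P := hP ▸ Finset.sum_nonneg fun i _ => hnonneg i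
  have hm0 : (0:ℝ) < m := by exact_mod_cast hm
  have hL0 : (0:ℝ) < L := by exact_mod_cast hL1
  have hmax0 : 0 ≤ max (4 * P * L / m) Δ := by
    refine le_max_of_le_left (div_nonneg ?_ hm0.le)
    positivity
  intro b
  by_cases hcase : m ≤ 4 * L ∨ P = 0
  · -- easy case: every load is ≤ P, and P ≤ 4PL/m (or P = 0)
    have h1 : greedyLoads L d r b ≤ P := by
      have h2 := greedyLoads_le_pSum L d hnonneg r b
      have h3 := pSum_le_total d hnonneg r
      rw [hP]; linarith
    rcases hcase with h | h
    · have hml : (m:ℝ) ≤ 4 * L := by exact_mod_cast h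
      have : P ≤ 4 * P * L / m := by
        rw [le_div_iff₀ hm0]; nlinarith
      exact le_max_of_le_left (h1.trans this)
    · rw [h] at h1 ⊢
      exact h1.trans (by simpa using hmax0)
  · push_neg at hcase
    obtain ⟨hm4, hP0⟩ := hcase
    have hm4 : 4 * L + 1 ≤ m := by omega
    have hm4' : (4 * L + 1 : ℝ) ≤ m := by exact_mod_cast hm4
    have hPpos : 0 < P := lt_of_le_of_ne hPnn (Ne.symm hP0)
    suffices H : ∀ t, ∀ b : Fin m, greedyLoads L d t b ≤ max (4 * P * L / m) Δ from H r b
    intro t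
    induction t with
    | zero => intro b; simpa [greedyLoads] using hmax0
    | succ t ih =>
      intro b
      rw [greedyLoads_succ]
      split_ifs with h1 h2
      · -- b receives item t
        have hfnn : ∀ b' : Fin m, 0 ≤ greedyLoads L d t b' := greedyLoads_nonneg L d hnonneg t
        set A : ℝ := (m:ℝ) - L + 1 with hAdef
        have hA : 0 < A := by
          have : (L:ℝ) ≤ m := by exact_mod_cast hLm
          simp only [hAdef]; linarith
        have hprev : A * greedyLoads L d t b ≤ L * P := by
          calc A * greedyLoads L d t b
              ≤ ∑ b' : Fin m, greedyLoads L d t b' := receiver_mul_le_sum hfnn h2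
            _ ≤ L * pSum d t := sum_greedyLoads_le L d hnonneg t
            _ ≤ L * P := by
                have h3 := pSum_le_total d hnonneg t
                rw [hP]; nlinarith
        have hfb : greedyLoads L d t b ≤ L * P / A := by
          rw [le_div_iff₀ hA]; linarith
        by_cases hdt : d ⟨t, h1⟩ ≤ 4 * P * L / m - L * P / A
        · exact le_max_of_le_left (by linarith)
        · push_neg at hdt
          -- the item is big: few items processed so far, so b was empty
          have hth : L * P / A ≤ 3 * P * L / m := by
            rw [div_le_div_iff₀ hA hm0]
            have h3A : (m:ℝ) ≤ 3 * A := by simp only [hAdef]; linarith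
            nlinarith [mul_pos hL0 hPpos, h3A]
          have hdm : L * P / m < d ⟨t, h1⟩ := by
            have e : 4 * P * L / m - 3 * P * L / m = L * P / m := by ring
            linarith
          have hdpos : 0 < d ⟨t, h1⟩ :=
            lt_of_le_of_lt (div_nonneg (by positivity) hm0.le) hdm
          -- (t+1) * d_t ≤ P
          set F := univ.filter (fun i : Fin r => (i : ℕ) < t + 1) with hFdef
          have hcardF : t + 1 ≤ F.card := by
            have hinj := Finset.card_le_card_of_injOn
              (f := fun n : ℕ => (⟨min n t, lt_of_le_of_lt (min_le_right n t) h1⟩ : Fin r))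
              (s := Finset.range (t+1)) (t := F)
              (by intro n hn
                  simp only [hFdef, mem_coe, mem_filter, mem_univ, true_and]
                  omega)
              (by intro a ha b' hb' hab
                  simp only [Fin.mk.injEq] at hab
                  simp only [coe_range, Set.mem_Iio] at ha hb'
                  omega)
            simpa using hinj
          have hF_ge : ∀ i ∈ F, d ⟨t, h1⟩ ≤ d i := by
            intro i hi
            simp only [hFdef, mem_filter, mem_univ, true_and] at hi
            exact hmono i ⟨t, h1⟩ (by simp only [Fin.le_def]; omega)
          have h5 : (F.card : ℝ) * d ⟨t, h1⟩ ≤ ∑ i ∈ F, d i := by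
            simpa [mul_comm] using Finset.card_nsmul_le_sum F d (d ⟨t, h1⟩) hF_ge
          have h6 : ∑ i ∈ F, d i ≤ P := by
            rw [hP]
            exact Finset.sum_le_sum_of_subset_of_nonneg (filter_subset _ _)
              (fun i _ _ => hnonneg i)
          have hsum' : ((t:ℝ) + 1) * d ⟨t, h1⟩ ≤ P := by
            have hc : ((t:ℝ) + 1) ≤ (F.card : ℝ) := by exact_mod_cast hcardF
            nlinarith
          have key : ((t:ℝ) + 1) * (L * P / m) < P := by
            have ht1 : (0:ℝ) < (t:ℝ) + 1 := by positivity
            nlinarith [mul_lt_mul_of_pos_left hdm ht1]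
          have hreal : ((t:ℝ) + 1) * L < m := by
            have hPm : 0 < P / m := div_pos hPpos hm0
            have hmm : (m:ℝ) * (P / m) = P := by field_simp
            have hexp : ((t:ℝ) + 1) * (L * P / m) = (((t:ℝ) + 1) * L) * (P / m) := by ring
            have : (((t:ℝ) + 1) * L) * (P / m) < (m:ℝ) * (P / m) := by
              rw [hmm]; linarith [key, hexp]
            exact lt_of_mul_lt_mul_right this hPm.le
          have hnat : (t + 1) * L < m := by exact_mod_cast (by push_cast; linarith : (((t:ℕ) + 1) * L : ℝ) < m)
          have hz : L + (univ.filter fun b' : Fin m => greedyLoads L d t b' ≠ 0).card ≤ m := by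
            calc L + (univ.filter fun b' : Fin m => greedyLoads L d t b' ≠ 0).card
                ≤ L + L * t := Nat.add_le_add_left (card_nonzero_le L d hnonneg t) L
              _ = (t + 1) * L := by ring
              _ ≤ m := Nat.le_of_lt hnat
          have h0 := receiver_prev_zero L d hnonneg h2 hz
          rw [h0, zero_add]
          exact le_max_of_le_right (hΔ ⟨t, h1⟩)
      · exact ih b
      · exact ih b
end

section
/- Let F be a finite field with q elements, let r ≥ 1 be an integer, let δ be a real number with 0 < δ < 1, and let d be a natural number with d ≤ (1−δ)(q−1) − 1 (as real numbers). Let s, x ∈ F^r and let A be a subset of F \ {0} with |A| ≥ (1−δ)(q−1). Then for any two multivariate polynomials f, g over F in r variables, each of total degree at most d, if f(s + a • x) = g(s + a • x) for every a ∈ A, then f(s) = g(s). -/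
/-- Two multivariate polynomials of total degree at most `d ≤ (1−δ)(q−1) − 1` over a
finite field with `q` elements that agree on at least `(1−δ)(q−1)` nonzero parameters
`a` along a line `a ↦ s + a • x` must agree at the base point `s`. -/
theorem eq_at_base_of_agree_on_line
    (F : Type*) [Field F] [Fintype F] (q : ℕ) (hq : q = Fintype.card F)
    (r : ℕ) (hr : 1 ≤ r) (δ : ℝ) (hδ0 : 0 < δ) (hδ1 : δ < 1)
    (d : ℕ) (hd : (d : ℝ) ≤ (1 - δ) * ((q : ℝ) - 1) - 1)
    (s x : Fin r → F) (A : Finset F) (hA0 : ∀ a ∈ A, a ≠ 0)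
    (hAcard : (1 - δ) * ((q : ℝ) - 1) ≤ (A.card : ℝ))
    (f g : MvPolynomial (Fin r) F)
    (hf : f.totalDegree ≤ d) (hg : g.totalDegree ≤ d)
    (hagree : ∀ a ∈ A,
      MvPolynomial.eval (s + a • x) f = MvPolynomial.eval (s + a • x) g) :
    MvPolynomial.eval s f = MvPolynomial.eval s g := by
  set h : MvPolynomial (Fin r) F := f - g with hh
  have hdeg : h.totalDegree ≤ d := by
    calc h.totalDegree = (f + (-g)).totalDegree := by rw [hh, sub_eq_add_neg]
    _ ≤ max f.totalDegree (-g).totalDegree := MvPolynomial.totalDegree_add _ _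
    _ ≤ d := by rw [MvPolynomial.totalDegree_neg]; exact max_le hf hg
  set p : Polynomial F :=
    MvPolynomial.aeval (fun i => Polynomial.C (s i) + Polynomial.C (x i) * Polynomial.X) h with hp
  have key0 : ∀ (P : MvPolynomial (Fin r) F) (a : F),
      Polynomial.eval a (MvPolynomial.aeval
        (fun i => Polynomial.C (s i) + Polynomial.C (x i) * Polynomial.X) P)
      = MvPolynomial.eval (s + a • x) P := by
    intro P a
    induction P using MvPolynomial.induction_on with
    | C c => simp
    | add p q hpq hq => simp [map_add, hpq, hq]
    | mul_X p i hpi =>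
      rw [map_mul, Polynomial.eval_mul, hpi, MvPolynomial.aeval_X, map_mul,
        MvPolynomial.eval_X]
      simp only [Polynomial.eval_add, Polynomial.eval_C, Polynomial.eval_mul,
        Polynomial.eval_X, Pi.add_apply, Pi.smul_apply, smul_eq_mul]
      ring
  have key : ∀ a : F, p.eval a = MvPolynomial.eval (s + a • x) h := fun a => key0 h a
  have hpdeg : p.natDegree ≤ d := by
    have := MvPolynomial.aeval_natDegree_le h hdeg
      (fun i => Polynomial.C (s i) + Polynomial.C (x i) * Polynomial.X)
      (fun i => by
        show (Polynomial.C (s i) + Polynomial.C (x i) * Polynomial.X).natDegree ≤ 1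
        refine (Polynomial.natDegree_add_le _ _).trans ?_
        simp only [Polynomial.natDegree_C, max_le_iff]
        exact ⟨Nat.zero_le _, (Polynomial.natDegree_C_mul_le _ _).trans (by simp)⟩)
    simpa using this
  have hdA : (d : ℝ) < (A.card : ℝ) := by linarith
  have hp0 : p = 0 := by
    apply Polynomial.eq_zero_of_natDegree_lt_card_of_eval_eq_zero' p A
    · intro a ha
      rw [key a]
      have := hagree a ha
      simp [hh, this]
    · exact_mod_cast lt_of_le_of_lt (Nat.cast_le.mpr hpdeg) hdA
  have := key 0
  rw [hp0] at this
  simp only [Polynomial.eval_zero, zero_smul, add_zero] at this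
  have : MvPolynomial.eval s h = 0 := this.symm
  rw [hh, map_sub, sub_eq_zero] at this
  exact this
end

section
/- Let F be a finite field with q elements, let r ≥ 1 be an integer, and let δ, δ' be reals with 0 < δ' and δ'·q^r < δ·(q^r − 1). Then for every s ∈ F^r and every I ⊆ F^r with |I| ≤ δ'·q^r, there exists a direction x ∈ F^r \ {0} such that |{ a ∈ F \ {0} : s + a • x ∈ I }| < δ(q − 1). -/
/-- Existence of a good direction: if `0 < δ'` and `δ'·q^r < δ·(q^r − 1)`, then for every
`s ∈ F^r` and every erasure set `I` with `|I| ≤ δ'·q^r`, there is a nonzero direction `x`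
such that fewer than `δ(q−1)` of the nonzero parameters `a` satisfy `s + a • x ∈ I`. -/
theorem exists_good_direction
    (F : Type*) [Field F] [Fintype F]
    (q : ℕ) (hq : q = Fintype.card F)
    (r : ℕ) (hr : 1 ≤ r) (δ δ' : ℝ) (hδ'0 : 0 < δ')
    (hδ'δ : δ' * (q : ℝ) ^ r < δ * ((q : ℝ) ^ r - 1)) :
    ∀ (s : Fin r → F) (I : Set (Fin r → F)), (I.ncard : ℝ) ≤ δ' * (q : ℝ) ^ r →
      ∃ x : Fin r → F, x ≠ 0 ∧
        ({a : F | a ≠ 0 ∧ s + a • x ∈ I}.ncard : ℝ) < δ * ((q : ℝ) - 1) := by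
  classical
  intro s I hI
  by_contra hcon
  push_neg at hcon
  have hq2 : 2 ≤ q := by rw [hq]; exact Fintype.one_lt_card
  -- the set of "bad" pairs
  set T : Finset ((Fin r → F) × F) :=
    Finset.univ.filter (fun p => p.1 ≠ 0 ∧ p.2 ≠ 0 ∧ s + p.2 • p.1 ∈ I) with hT
  -- upper bound on T.card
  have hT_le : T.card ≤ I.ncard * (q - 1) := by
    have : T.card ≤ (I.toFinset ×ˢ (Finset.univ.erase (0 : F))).card := by
      apply Finset.card_le_card_of_injOn (fun p => (s + p.2 • p.1, p.2))
      · intro p hp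
        simp only [hT, Finset.mem_coe, Finset.mem_filter] at hp
        simp only [Finset.mem_coe, Finset.mem_product, Set.mem_toFinset, Finset.mem_erase,
          Finset.mem_univ, and_true]
        exact ⟨hp.2.2.2, hp.2.2.1⟩
      · intro p hp p' hp' he
        simp only [hT, Finset.mem_filter, Finset.mem_coe] at hp hp'
        simp only [Prod.mk.injEq] at he
        obtain ⟨h1, ha⟩ := he
        rw [ha] at h1
        have h2 : p'.2 • p.1 = p'.2 • p'.1 := add_left_cancel h1
        have hx : p.1 = p'.1 := by
          have := congrArg (fun y => p'.2⁻¹ • y) h2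
          simpa [smul_smul, inv_mul_cancel₀ hp'.2.2.1] using this
        exact Prod.ext hx ha
    rw [Finset.card_product, Finset.card_erase_of_mem (Finset.mem_univ 0),
      Finset.card_univ, ← hq] at this
    rw [Set.ncard_eq_toFinset_card']
    exact this
  -- lower bound: fiberwise count
  set X : Finset (Fin r → F) := Finset.univ.filter (fun x => x ≠ 0) with hX
  have hfiber : ∀ x ∈ X, (T.filter (fun p => p.1 = x)).card =
      {a : F | a ≠ 0 ∧ s + a • x ∈ I}.ncard := by
    intro x hx
    rw [Set.ncard_eq_toFinset_card']
    apply Finset.card_bij (fun p _ => p.2)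
    · intro p hp
      simp only [hT, Finset.mem_filter, Finset.mem_univ, true_and] at hp
      simp only [Set.mem_toFinset, Set.mem_setOf_eq]
      exact ⟨hp.1.2.1, hp.2 ▸ hp.1.2.2⟩
    · intro p hp p' hp' he
      simp only [hT, Finset.mem_filter] at hp hp'
      exact Prod.ext (hp.2.trans hp'.2.symm) he
    · intro a ha
      simp only [Set.mem_toFinset, Set.mem_setOf_eq] at ha
      refine ⟨(x, a), ?_, rfl⟩
      simp only [hT, Finset.mem_filter, Finset.mem_univ, true_and]
      simp only [hX, Finset.mem_filter, Finset.mem_univ, true_and] at hx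
      exact ⟨⟨hx, ha.1, ha.2⟩, trivial⟩
  have hTsum : T.card = ∑ x ∈ X, (T.filter (fun p => p.1 = x)).card := by
    apply Finset.card_eq_sum_card_fiberwise
    intro p hp
    simp only [hT, Finset.mem_coe, Finset.mem_filter, Finset.mem_univ, true_and] at hp
    simp only [hX, Finset.mem_coe, Finset.mem_filter, Finset.mem_univ, true_and]
    exact hp.1
  have hXcard : (X.card : ℝ) = (q : ℝ) ^ r - 1 := by
    have : X.card = Fintype.card (Fin r → F) - 1 := by
      rw [hX, Finset.filter_ne', Finset.card_erase_of_mem (Finset.mem_univ 0),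
        Finset.card_univ]
    rw [this, Fintype.card_fun, Fintype.card_fin, ← hq]
    have h1 : 1 ≤ q ^ r := Nat.one_le_pow _ _ (by omega)
    push_cast [Nat.cast_sub h1]
    ring
  have hq1 : (0 : ℝ) < (q : ℝ) - 1 := by
    have : (2 : ℝ) ≤ q := by exact_mod_cast hq2
    linarith
  -- combine
  have hlow : ((q : ℝ) ^ r - 1) * (δ * ((q : ℝ) - 1)) ≤ (T.card : ℝ) := by
    rw [hTsum]
    push_cast
    rw [← hXcard]
    calc (X.card : ℝ) * (δ * ((q : ℝ) - 1))
        = ∑ _x ∈ X, δ * ((q : ℝ) - 1) := by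
          rw [Finset.sum_const, nsmul_eq_mul]
      _ ≤ ∑ x ∈ X, ((T.filter (fun p => p.1 = x)).card : ℝ) := by
          apply Finset.sum_le_sum
          intro x hx
          rw [hfiber x hx]
          simp only [hX, Finset.mem_filter, Finset.mem_univ, true_and] at hx
          exact hcon x hx
  have hup : (T.card : ℝ) ≤ δ' * (q : ℝ) ^ r * ((q : ℝ) - 1) := by
    have h1 : (T.card : ℝ) ≤ (I.ncard : ℝ) * ((q : ℝ) - 1) := by
      have := hT_le
      have hcast : ((I.ncard * (q - 1) : ℕ) : ℝ) = (I.ncard : ℝ) * ((q : ℝ) - 1) := by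
        push_cast [Nat.cast_sub (by omega : 1 ≤ q)]
        ring
      calc (T.card : ℝ) ≤ ((I.ncard * (q - 1) : ℕ) : ℝ) := by exact_mod_cast this
        _ = _ := hcast
    calc (T.card : ℝ) ≤ (I.ncard : ℝ) * ((q : ℝ) - 1) := h1
      _ ≤ δ' * (q : ℝ) ^ r * ((q : ℝ) - 1) := by
          apply mul_le_mul_of_nonneg_right hI (le_of_lt hq1)
  have : δ' * (q : ℝ) ^ r * ((q : ℝ) - 1) < δ * ((q : ℝ) ^ r - 1) * ((q : ℝ) - 1) :=
    mul_lt_mul_of_pos_right hδ'δ hq1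
  nlinarith [hlow, hup]
end

section
/- Deterministic local decoding of Reed–Muller codes with known erasures: Let F be a finite field with q elements, let r ≥ 1 be an integer, let δ, δ' be reals with 0 < δ' and δ'·q^r < δ·(q^r − 1) and δ < 1, and let d be a natural number with d ≤ (1−δ)(q−1) − 1 (as real numbers). Then for every s ∈ F^r and every erasure set I ⊆ F^r with |I| ≤ δ'·q^r, there exists a direction x ∈ F^r \ {0} such that for all multivariate polynomials f, g over F in r variables, each of total degree at most d: if f(y) = g(y) for every point y ∈ L(s,x) \ I, then f(s) = g(s). -/
open Polynomial

lemma eval_aeval_line {F : Type*} [CommSemiring F] {r : ℕ} (φ : Fin r → Polynomial F)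
    (p : MvPolynomial (Fin r) F) (a : F) :
    Polynomial.eval a (MvPolynomial.aeval φ p) =
      MvPolynomial.eval (fun i => Polynomial.eval a (φ i)) p := by
  rw [MvPolynomial.aeval_def]
  rw [show Polynomial.eval a (MvPolynomial.eval₂ (algebraMap F (Polynomial F)) φ p)
      = (Polynomial.evalRingHom a) (MvPolynomial.eval₂ (algebraMap F (Polynomial F)) φ p) from rfl]
  rw [MvPolynomial.eval₂_comp_left]
  simp [MvPolynomial.eval_eq, MvPolynomial.eval₂_eq, Function.comp]

lemma natDegree_aeval_le {F : Type*} [CommRing F] {r : ℕ} (φ : Fin r → Polynomial F)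
    (hφ : ∀ i, (φ i).natDegree ≤ 1) (p : MvPolynomial (Fin r) F) :
    (MvPolynomial.aeval φ p).natDegree ≤ p.totalDegree := by
  rw [MvPolynomial.aeval_def, MvPolynomial.eval₂_eq]
  apply Polynomial.natDegree_sum_le_of_forall_le
  intro m hm
  calc (algebraMap F (Polynomial F) (MvPolynomial.coeff m p) * ∏ i ∈ m.support, φ i ^ m i).natDegree
      ≤ (algebraMap F (Polynomial F) (MvPolynomial.coeff m p)).natDegree
        + (∏ i ∈ m.support, φ i ^ m i).natDegree := Polynomial.natDegree_mul_le
    _ ≤ 0 + ∑ i ∈ m.support, (φ i ^ m i).natDegree := by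
        gcongr
        · exact le_of_eq (Polynomial.natDegree_C _)
        · exact Polynomial.natDegree_prod_le _ _
    _ ≤ ∑ i ∈ m.support, m i * 1 := by
        rw [zero_add]
        apply Finset.sum_le_sum
        intro i _
        exact Polynomial.natDegree_pow_le_of_le _ (hφ i)
    _ = ∑ i ∈ m.support, m i := by simp
    _ ≤ p.totalDegree := MvPolynomial.le_totalDegree hm



/-- The punctured line through `s` in direction `x`: `L(s,x) = {s + a • x : a ∈ F, a ≠ 0}`. -/
def puncturedLine {F : Type*} [Field F] {r : ℕ} (s x : Fin r → F) : Set (Fin r → F) :=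
  {p | ∃ a : F, a ≠ 0 ∧ p = s + a • x}

/-- Deterministic local decoding of Reed–Muller codes with known erasures: if
`0 < δ'`, `δ'·q^r < δ·(q^r − 1)`, `δ < 1` and `d ≤ (1−δ)(q−1) − 1`, then for every
`s ∈ F^r` and every erasure set `I` with `|I| ≤ δ'·q^r` there is a nonzero direction `x`
such that any two `r`-variate polynomials of total degree at most `d` that agree on all
non-erased points of the punctured line `L(s,x)` must agree at `s`. -/
theorem deterministic_local_decoding_known_erasures
    (F : Type*) [Field F] [Fintype F]
    (q : ℕ) (hq : q = Fintype.card F)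
    (r : ℕ) (hr : 1 ≤ r) (δ δ' : ℝ) (hδ'0 : 0 < δ')
    (hδ'δ : δ' * (q : ℝ) ^ r < δ * ((q : ℝ) ^ r - 1)) (hδ1 : δ < 1)
    (d : ℕ) (hd : (d : ℝ) ≤ (1 - δ) * ((q : ℝ) - 1) - 1) :
    ∀ (s : Fin r → F) (I : Set (Fin r → F)), (I.ncard : ℝ) ≤ δ' * (q : ℝ) ^ r →
      ∃ x : Fin r → F, x ≠ 0 ∧
        ∀ f g : MvPolynomial (Fin r) F, f.totalDegree ≤ d → g.totalDegree ≤ d →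
          (∀ y ∈ puncturedLine s x \ I,
            MvPolynomial.eval y f = MvPolynomial.eval y g) →
          MvPolynomial.eval s f = MvPolynomial.eval s g := by
  classical
  intro s I hI
  have hq2 : 2 ≤ q := hq ▸ Fintype.one_lt_card
  have hq2R : (2:ℝ) ≤ (q:ℝ) := by exact_mod_cast hq2
  have hqrR : (2:ℝ) ≤ (q:ℝ)^r := by
    calc (2:ℝ) ≤ (q:ℝ) := hq2R
    _ = (q:ℝ)^1 := (pow_one _).symm
    _ ≤ (q:ℝ)^r := pow_le_pow_right₀ (by linarith) hr
  have hqr1 : (0:ℝ) < (q:ℝ)^r - 1 := by linarith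
  have hδ0 : 0 < δ := by nlinarith
  set n : (Fin r → F) → ℕ :=
    fun x => (Finset.univ.filter (fun a : F => a ≠ 0 ∧ (s + a • x) ∈ I)).card with hn
  have hcardF : Fintype.card F = q := hq.symm
  have hcardV : Fintype.card (Fin r → F) = q ^ r := by
    rw [Fintype.card_fun, Fintype.card_fin, hcardF]
  have hcF : (Finset.univ.filter (fun a : F => a ≠ 0)).card = q - 1 := by
    rw [Finset.filter_ne', Finset.card_erase_of_mem (Finset.mem_univ _),
      Finset.card_univ, hcardF]
  set T : Finset (Fin r → F) := Finset.univ.filter (fun x => x ≠ 0) with hT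
  have hTcard : T.card = q ^ r - 1 := by
    rw [hT, Finset.filter_ne', Finset.card_erase_of_mem (Finset.mem_univ _),
      Finset.card_univ, hcardV]
  have hTne : T.Nonempty := by
    refine ⟨fun _ => 1, ?_⟩
    simp only [hT, Finset.mem_filter, Finset.mem_univ, true_and]
    intro h
    have := congr_fun h ⟨0, hr⟩
    simp at this
  -- double counting
  have hfix : ∀ a : F, a ≠ 0 →
      (Finset.univ.filter (fun x : Fin r → F => s + a • x ∈ I)).card = I.ncard := by
    intro a ha
    rw [Set.ncard_eq_toFinset_card']
    apply Finset.card_bij (fun x _ => s + a • x)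
    · intro x hx
      simp only [Finset.mem_filter] at hx
      simpa using hx.2
    · intro x hx y hy hxy
      have h2 : a • x = a • y := add_left_cancel hxy
      exact smul_right_injective (Fin r → F) ha h2
    · intro y hy
      refine ⟨a⁻¹ • (y - s), ?_, ?_⟩
      · simp only [Finset.mem_filter, Finset.mem_univ, true_and]
        rw [smul_smul, mul_inv_cancel₀ ha, one_smul]
        · simpa using hy
      · rw [smul_smul, mul_inv_cancel₀ ha, one_smul]; abel
  have hsum : ∑ x ∈ T, n x ≤ (q - 1) * I.ncard := by
    have h1 : ∑ x ∈ T, n x ≤ ∑ x : Fin r → F, n x :=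
      Finset.sum_le_sum_of_subset (Finset.filter_subset _ _)
    have h2 : ∑ x : Fin r → F, n x = (q - 1) * I.ncard := by
      have e1 : ∑ x : Fin r → F, n x
          = ∑ x : Fin r → F, ∑ a : F, if a ≠ 0 ∧ (s + a • x) ∈ I then 1 else 0 := by
        simp only [hn, Finset.card_filter]
      rw [e1, Finset.sum_comm]
      have e2 : ∀ a : F, (∑ x : Fin r → F, if a ≠ 0 ∧ (s + a • x) ∈ I then 1 else 0)
          = if a ≠ 0 then I.ncard else 0 := by
        intro a
        by_cases ha : a = 0
        · simp [ha]
        · rw [if_pos ha, ← hfix a ha, Finset.card_filter]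
          apply Finset.sum_congr rfl
          intro x _
          simp [ha]
      rw [Finset.sum_congr rfl (fun a _ => e2 a), ← Finset.sum_filter,
        Finset.sum_const, hcF, smul_eq_mul]
    exact h2 ▸ h1
  -- pigeonhole: find a good direction x
  obtain ⟨x, hxT, hx⟩ := Finset.exists_le_of_sum_le hTne
    (show ∑ y ∈ T, T.card * n y ≤ ∑ y ∈ T, (∑ z ∈ T, n z) by
      rw [← Finset.mul_sum, Finset.sum_const, smul_eq_mul])
  have hxne : x ≠ 0 := (Finset.mem_filter.mp hxT).2
  have hkey : (T.card : ℝ) * n x ≤ (q - 1 : ℝ) * I.ncard := by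
    have h1 : (T.card * n x : ℕ) ≤ ((q - 1) * I.ncard : ℕ) := le_trans hx hsum
    have h2 : ((q - 1 : ℕ) : ℝ) = (q : ℝ) - 1 := by
      rw [Nat.cast_sub (by omega)]; simp
    calc (T.card : ℝ) * n x = ((T.card * n x : ℕ) : ℝ) := by push_cast; ring
      _ ≤ (((q - 1) * I.ncard : ℕ) : ℝ) := by exact_mod_cast h1
      _ = ((q:ℝ) - 1) * I.ncard := by rw [Nat.cast_mul, h2]
  have hTcardR : (T.card : ℝ) = (q:ℝ)^r - 1 := by
    rw [hTcard, Nat.cast_sub (Nat.one_le_pow _ _ (by omega)), Nat.cast_pow]; simp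
  have hnx : (n x : ℝ) < δ * ((q:ℝ) - 1) := by
    rw [hTcardR] at hkey
    have hq1 : (0:ℝ) < (q:ℝ) - 1 := by linarith
    nlinarith [hkey, hI, hδ'δ]
  -- the good set of parameters
  refine ⟨x, hxne, ?_⟩
  intro f g hf hg hagree
  set A : Finset F := Finset.univ.filter (fun a : F => a ≠ 0 ∧ (s + a • x) ∉ I) with hA
  have hAcard : A.card + n x = q - 1 := by
    simp only [hA, hn]
    rw [show (Finset.univ.filter (fun a : F => a ≠ 0 ∧ (s + a • x) ∉ I))
        = (Finset.univ.filter (fun a : F => a ≠ 0)).filter (fun a => (s + a • x) ∉ I) by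
      rw [Finset.filter_filter]]
    rw [show (Finset.univ.filter (fun a : F => a ≠ 0 ∧ (s + a • x) ∈ I))
        = (Finset.univ.filter (fun a : F => a ≠ 0)).filter (fun a => (s + a • x) ∈ I) by
      rw [Finset.filter_filter]]
    rw [← hcF, add_comm]
    exact Finset.card_filter_add_card_filter_not _
  have hdA : d < A.card := by
    have hAR : (A.card : ℝ) = ((q:ℝ) - 1) - n x := by
      have : ((q - 1 : ℕ) : ℝ) = (q : ℝ) - 1 := by
        rw [Nat.cast_sub (by omega)]; simp
      rw [← this, ← hAcard]; push_cast; ring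
    have : (d : ℝ) < (A.card : ℝ) := by
      rw [hAR]; nlinarith
    exact_mod_cast this
  -- polynomial argument
  set φ : Fin r → Polynomial F :=
    fun i => Polynomial.C (s i) + Polynomial.X * Polynomial.C (x i) with hφ
  have hφdeg : ∀ i, (φ i).natDegree ≤ 1 := by
    intro i
    refine le_trans (Polynomial.natDegree_add_le _ _) ?_
    simp only [Polynomial.natDegree_C]
    refine max_le (by omega) (le_trans Polynomial.natDegree_mul_le ?_)
    simp
  set h : Polynomial F := MvPolynomial.aeval φ f - MvPolynomial.aeval φ g with hh
  have heval : ∀ a : F, Polynomial.eval a h =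
      MvPolynomial.eval (s + a • x) f - MvPolynomial.eval (s + a • x) g := by
    intro a
    have hpt : (fun i => Polynomial.eval a (φ i)) = s + a • x := by
      funext i
      show Polynomial.eval a (Polynomial.C (s i) + Polynomial.X * Polynomial.C (x i))
          = s i + a * x i
      simp only [Polynomial.eval_add, Polynomial.eval_C, Polynomial.eval_mul, Polynomial.eval_X]
    rw [hh, Polynomial.eval_sub, eval_aeval_line, eval_aeval_line, hpt]
  have hroots : ∀ a ∈ A, Polynomial.IsRoot h a := by
    intro a ha
    simp only [hA, Finset.mem_filter, Finset.mem_univ, true_and] at ha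
    have hy : (s + a • x) ∈ puncturedLine s x \ I :=
      ⟨⟨a, ha.1, rfl⟩, ha.2⟩
    have := hagree _ hy
    simp [Polynomial.IsRoot, heval a, this]
  have hdeg : h.natDegree ≤ d := by
    refine le_trans (Polynomial.natDegree_sub_le _ _) (max_le ?_ ?_)
    · exact le_trans (natDegree_aeval_le φ hφdeg f) hf
    · exact le_trans (natDegree_aeval_le φ hφdeg g) hg
  have hzero : h = 0 := by
    by_contra hne
    have hsub : A.val ⊆ h.roots := by
      intro a ha
      rw [Polynomial.mem_roots hne]
      exact hroots a ha
    have := Polynomial.card_le_degree_of_subset_roots hsub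
    omega
  have h0 : Polynomial.eval 0 h = 0 := by rw [hzero]; simp
  rw [heval 0] at h0
  have : s + (0:F) • x = s := by simp
  rw [this] at h0
  exact sub_eq_zero.mp h0
end

section
/- Let δ ∈ (0,1) be real and let q, r be integers with q ≥ 2 + 4/(1−δ), and set d = ⌊(1−δ)(q−1)⌋ − 1. If 1 ≤ r ≤ d, then the binomial coefficient C(r+d, r) satisfies C(r+d, r) ≥ ((1−δ)·q/(2r))^r; equivalently, C(r+d, r) ≥ q^r / ((2/(1−δ))·r)^r. -/
/-- Dimension lower bound for Reed–Muller codes: for `δ ∈ (0,1)`, integers `q, r` with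
`q ≥ 2 + 4/(1−δ)`, and `d = ⌊(1−δ)(q−1)⌋ − 1`, if `1 ≤ r ≤ d` then
`C(r+d, r) ≥ ((1−δ)·q/(2r))^r`, equivalently `C(r+d, r) ≥ q^r / ((2/(1−δ))·r)^r`. -/
theorem choose_ge_reed_muller_dimension_bound
    (δ : ℝ) (hδ0 : 0 < δ) (hδ1 : δ < 1)
    (q r : ℕ) (hq : 2 + 4 / (1 - δ) ≤ (q : ℝ))
    (d : ℕ) (hd : (d : ℤ) = ⌊(1 - δ) * ((q : ℝ) - 1)⌋ - 1)
    (hr1 : 1 ≤ r) (hrd : r ≤ d) :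
    ((1 - δ) * (q : ℝ) / (2 * (r : ℝ))) ^ r ≤ ((r + d).choose r : ℝ) ∧
    (q : ℝ) ^ r / ((2 / (1 - δ)) * (r : ℝ)) ^ r ≤ ((r + d).choose r : ℝ) := by
  have h1δ : (0:ℝ) < 1 - δ := by linarith
  have hrpos : (0:ℝ) < r := by exact_mod_cast hr1
  -- (1-δ)*q ≥ 2*(1-δ) + 4
  have h4 : 2 * (1 - δ) + 4 ≤ (1 - δ) * q := by
    have := mul_le_mul_of_nonneg_left hq h1δ.le
    have h4' : (1 - δ) * (4 / (1 - δ)) = 4 := by field_simp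
    nlinarith
  -- d ≥ (1-δ)q/2
  have hfloor : (1 - δ) * ((q : ℝ) - 1) - 1 ≤ (⌊(1 - δ) * ((q : ℝ) - 1)⌋ : ℝ) := by
    have := Int.sub_one_lt_floor ((1 - δ) * ((q : ℝ) - 1))
    linarith
  have hdR : (1 - δ) * ((q : ℝ) - 1) - 2 ≤ (d : ℝ) := by
    have : (d : ℝ) = (⌊(1 - δ) * ((q : ℝ) - 1)⌋ : ℝ) - 1 := by
      exact_mod_cast hd
    linarith
  have hxd : (1 - δ) * (q : ℝ) / 2 ≤ (d : ℝ) := by nlinarith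
  have hx0 : (0:ℝ) ≤ (1 - δ) * (q : ℝ) / (2 * r) := by
    have hq0 : (0:ℝ) ≤ q := Nat.cast_nonneg q
    positivity
  -- main bound: (d/r)^r ≤ C(r+d, r)
  have hchoose : ((d : ℝ) / r) ^ r ≤ ((r + d).choose r : ℝ) := by
    have h1 : (((r + d) + 1 - r : ℕ) ^ r : ℝ) / (Nat.factorial r) ≤ ((r + d).choose r : ℝ) :=
      Nat.pow_le_choose r (r + d)
    have h2 : ((r + d) + 1 - r : ℕ) = d + 1 := by omega
    rw [h2] at h1
    refine le_trans ?_ h1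
    rw [div_pow, div_le_div_iff₀ (by positivity) (by exact_mod_cast Nat.factorial_pos r)]
    have e1 : (d : ℝ) ^ r ≤ ((d : ℝ) + 1) ^ r := by
      apply pow_le_pow_left₀ (Nat.cast_nonneg d); linarith
    have e2 : (((Nat.factorial r) : ℕ) : ℝ) ≤ (r : ℝ) ^ r := by
      exact_mod_cast Nat.factorial_le_pow r
    have hd1 : ((d:ℕ):ℝ) + 1 = ((d + 1 : ℕ) : ℝ) := by push_cast; ring
    calc (d : ℝ) ^ r * (Nat.factorial r) ≤ ((d : ℝ) + 1) ^ r * (r : ℝ) ^ r := by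
          apply mul_le_mul e1 e2 (by positivity) (by positivity)
      _ = ((d + 1 : ℕ) : ℝ) ^ r * (r : ℝ) ^ r := by rw [hd1]
  have hmain : ((1 - δ) * (q : ℝ) / (2 * (r : ℝ))) ^ r ≤ ((r + d).choose r : ℝ) := by
    refine le_trans (pow_le_pow_left₀ hx0 ?_ r) hchoose
    rw [div_le_div_iff₀ (by positivity) hrpos]
    calc (1 - δ) * (q:ℝ) * r = ((1 - δ) * q / 2) * (2 * r) := by ring
      _ ≤ (d : ℝ) * (2 * r) := by
          apply mul_le_mul_of_nonneg_right hxd (by positivity)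
  refine ⟨hmain, ?_⟩
  have heq : (q : ℝ) ^ r / ((2 / (1 - δ)) * (r : ℝ)) ^ r
      = ((1 - δ) * (q : ℝ) / (2 * (r : ℝ))) ^ r := by
    rw [← div_pow]
    congr 1
    field_simp
  rw [heq]; exact hmain
end
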